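/- Let (S,d) be a complete separable metric space and let M ⊆ M(S) satisfy m := sup_{μ ∈ M} ‖μ‖_TV < ∞. Suppose that for every μ ∈ M and every ε > 0 there exist compact sets K_1, …, K_n ⊆ S such that, with K = K_1 ∪ … ∪ K_n: (i) |μ|(S∖K) < ε, and (ii) there exists 0 < λ₀ ≤ ε such that for every 0 < λ ≤ λ₀ there exist δ_1, …, δ_n > 0 with the property that whenever ν ∈ M satisfies |∫_S h_{λ,K_i} d(μ−ν)| < δ_i for all i = 1,…,n, then |ν|(S∖K^λ) < ε. Then the restriction to M of the σ(M(S), BL(S))-weak topology is first countable. -/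

import Mathlib

open MeasureTheory Filter Topology

/-- A function is bounded Lipschitz. -/
def IsBL {S : Type*} [PseudoMetricSpace S] (f : S → ℝ) : Prop :=
  (∃ C : ℝ, ∀ x, |f x| ≤ C) ∧ ∃ K : NNReal, LipschitzWith K f

/-- Pairing of a finite signed Borel measure with a function, via the Jordan decomposition. -/
noncomputable def pairing {S : Type*} [MeasurableSpace S] (μ : SignedMeasure S) (f : S → ℝ) : ℝ :=
  (∫ x, f x ∂μ.toJordanDecomposition.posPart) - ∫ x, f x ∂μ.toJordanDecomposition.negPart

/-- Total variation norm of a finite signed measure. -/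
noncomputable def tvNorm {S : Type*} [MeasurableSpace S] (μ : SignedMeasure S) : ℝ :=
  (μ.totalVariation Set.univ).toReal

/-- Dual bounded Lipschitz norm on signed measures. -/
noncomputable def blDualNorm {S : Type*} [PseudoMetricSpace S] [MeasurableSpace S]
    (μ : SignedMeasure S) : ℝ :=
  sSup {r : ℝ | ∃ (f : S → ℝ) (C : ℝ) (K : NNReal), (∀ x, |f x| ≤ C) ∧
    LipschitzWith K f ∧ C + (K : ℝ) ≤ 1 ∧ r = |pairing μ f|}

/-- The `σ(M(S), BL(S))`-weak topology on `M(S)`: the coarsest topology making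
`μ ↦ ⟨μ, f⟩` continuous for every bounded Lipschitz `f`. -/
noncomputable def weakTop (S : Type*) [PseudoMetricSpace S] [MeasurableSpace S] :
    TopologicalSpace (SignedMeasure S) :=
  ⨅ f : {g : S → ℝ // IsBL g},
    TopologicalSpace.induced (fun μ : SignedMeasure S => pairing μ f.1) inferInstance

/-- The function `h_{λ,C}(x) = max(1 − d(x,C)/λ, 0)`. -/
noncomputable def hFun {S : Type*} [MetricSpace S] (lam : ℝ) (C : Set S) (x : S) : ℝ :=
  max (1 - Metric.infDist x C / lam) 0

/-! ### Auxiliary lemmas -/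

section PairingLemmas
variable {S : Type*} [MeasurableSpace S]

lemma integrable_of_cont_bdd [TopologicalSpace S] [OpensMeasurableSpace S]
    (κ : Measure S) [IsFiniteMeasure κ] {f : S → ℝ} (hf : Continuous f) {C : ℝ}
    (hb : ∀ x, |f x| ≤ C) : Integrable f κ :=
  ⟨hf.aestronglyMeasurable, HasFiniteIntegral.of_bounded (C := C)
    (Filter.Eventually.of_forall (fun x => by simpa [Real.norm_eq_abs] using hb x))⟩

lemma signedMeasure_apply_eq (a : SignedMeasure S) {s : Set S} (hs : MeasurableSet s) :
    a s = (a.toJordanDecomposition.posPart s).toReal -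
      (a.toJordanDecomposition.negPart s).toReal := by
  conv_lhs => rw [← a.toSignedMeasure_toJordanDecomposition]
  rw [JordanDecomposition.toSignedMeasure, Measure.toSignedMeasure_sub_apply hs]
  rfl

lemma jordan_add_eq (a b : SignedMeasure S) :
    (a + b).toJordanDecomposition.posPart + (a.toJordanDecomposition.negPart
      + b.toJordanDecomposition.negPart) =
    (a + b).toJordanDecomposition.negPart + (a.toJordanDecomposition.posPart
      + b.toJordanDecomposition.posPart) := by
  ext s hs
  simp only [Measure.add_apply]
  have h1 := signedMeasure_apply_eq (a + b) hs
  have h2 := signedMeasure_apply_eq a hs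
  have h3 := signedMeasure_apply_eq b hs
  have hadd : (a + b) s = a s + b s := by
    simp [VectorMeasure.add_apply]
  rw [h1, h2, h3] at hadd
  have e1 : ((a + b).toJordanDecomposition.posPart s).toReal
      + ((a.toJordanDecomposition.negPart s).toReal + (b.toJordanDecomposition.negPart s).toReal)
      = ((a + b).toJordanDecomposition.negPart s).toReal
      + ((a.toJordanDecomposition.posPart s).toReal
        + (b.toJordanDecomposition.posPart s).toReal) := by linarith
  have := congrArg ENNReal.ofReal e1
  rwa [ENNReal.ofReal_add ENNReal.toReal_nonneg (by positivity),
    ENNReal.ofReal_add ENNReal.toReal_nonneg ENNReal.toReal_nonneg,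
    ENNReal.ofReal_add ENNReal.toReal_nonneg (by positivity),
    ENNReal.ofReal_add ENNReal.toReal_nonneg ENNReal.toReal_nonneg,
    ENNReal.ofReal_toReal (measure_ne_top _ _), ENNReal.ofReal_toReal (measure_ne_top _ _),
    ENNReal.ofReal_toReal (measure_ne_top _ _), ENNReal.ofReal_toReal (measure_ne_top _ _),
    ENNReal.ofReal_toReal (measure_ne_top _ _), ENNReal.ofReal_toReal (measure_ne_top _ _)]
    at this

variable [TopologicalSpace S] [OpensMeasurableSpace S]

lemma pairing_add (a b : SignedMeasure S) {f : S → ℝ} (hf : Continuous f) {C : ℝ}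
    (hb : ∀ x, |f x| ≤ C) :
    pairing (a + b) f = pairing a f + pairing b f := by
  have key := congrArg (fun κ : Measure S => ∫ x, f x ∂κ) (jordan_add_eq a b)
  simp only [integral_add_measure (integrable_of_cont_bdd _ hf hb)
      ((integrable_of_cont_bdd _ hf hb).add_measure (integrable_of_cont_bdd _ hf hb)),
    integral_add_measure (integrable_of_cont_bdd _ hf hb) (integrable_of_cont_bdd _ hf hb)]
    at key
  unfold pairing
  linarith

omit [TopologicalSpace S] [OpensMeasurableSpace S] in
lemma pairing_zero (f : S → ℝ) : pairing (0 : SignedMeasure S) f = 0 := by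
  unfold pairing
  rw [SignedMeasure.toJordanDecomposition_zero]
  simp

lemma pairing_sub (a b : SignedMeasure S) {f : S → ℝ} (hf : Continuous f) {C : ℝ}
    (hb : ∀ x, |f x| ≤ C) :
    pairing (a - b) f = pairing a f - pairing b f := by
  have h := pairing_add (a - b) b hf hb
  rw [sub_add_cancel] at h
  linarith

lemma pairing_abs_le (a : SignedMeasure S) {f : S → ℝ} (hf : Continuous f) {C : ℝ}
    (hb : ∀ x, |f x| ≤ C) :
    |pairing a f| ≤ ∫ x, |f x| ∂a.totalVariation := by
  have h1 : Integrable f a.toJordanDecomposition.posPart := integrable_of_cont_bdd _ hf hb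
  have h2 : Integrable f a.toJordanDecomposition.negPart := integrable_of_cont_bdd _ hf hb
  have hTV : (∫ x, |f x| ∂a.totalVariation)
      = (∫ x, |f x| ∂a.toJordanDecomposition.posPart)
        + ∫ x, |f x| ∂a.toJordanDecomposition.negPart := by
    rw [SignedMeasure.totalVariation, integral_add_measure h1.abs h2.abs]
  rw [hTV]
  calc |pairing a f| ≤ |∫ x, f x ∂a.toJordanDecomposition.posPart|
        + |∫ x, f x ∂a.toJordanDecomposition.negPart| := abs_sub _ _
    _ ≤ _ := by
        gcongr
        · simpa [Real.norm_eq_abs] using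
            norm_integral_le_integral_norm (μ := a.toJordanDecomposition.posPart) f
        · simpa [Real.norm_eq_abs] using
            norm_integral_le_integral_norm (μ := a.toJordanDecomposition.negPart) f

instance totalVariation_isFiniteMeasure (a : SignedMeasure S) :
    IsFiniteMeasure a.totalVariation := by
  unfold SignedMeasure.totalVariation
  infer_instance

lemma integral_abs_split (τ : Measure S) [IsFiniteMeasure τ] {φ : S → ℝ}
    (hφ : Continuous φ) {Q : Set S} (hQ : MeasurableSet Q) {a b : ℝ}
    (ha : ∀ z ∈ Q, |φ z| ≤ a) (hball : ∀ z, |φ z| ≤ b) :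
    ∫ x, |φ x| ∂τ ≤ a * (τ Q).toReal + b * (τ Qᶜ).toReal := by
  have hint : Integrable (fun x => |φ x|) τ := (integrable_of_cont_bdd τ hφ hball).abs
  rw [← integral_add_compl hQ hint]
  have h1 : ∫ x in Q, |φ x| ∂τ ≤ a * (τ Q).toReal := by
    calc ∫ x in Q, |φ x| ∂τ ≤ ∫ _x in Q, a ∂τ :=
          setIntegral_mono_on hint.integrableOn
            (integrableOn_const (measure_ne_top _ _)) hQ ha
      _ = a * (τ Q).toReal := by rw [setIntegral_const, smul_eq_mul, mul_comm]; rfl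
  have h2 : ∫ x in Qᶜ, |φ x| ∂τ ≤ b * (τ Qᶜ).toReal := by
    calc ∫ x in Qᶜ, |φ x| ∂τ ≤ ∫ _x in Qᶜ, b ∂τ :=
          setIntegral_mono_on hint.integrableOn
            (integrableOn_const (measure_ne_top _ _)) hQ.compl
            (fun z _ => hball z)
      _ = b * (τ Qᶜ).toReal := by rw [setIntegral_const, smul_eq_mul, mul_comm]; rfl
  linarith

end PairingLemmas

section HFunLemmas
variable {S : Type*} [MetricSpace S]

lemma hFun_abs_le {lam : ℝ} (hlam : 0 < lam) (C : Set S) (x : S) : |hFun lam C x| ≤ 1 := by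
  rw [abs_le]
  constructor
  · exact le_trans (by norm_num) (le_max_right _ _)
  · apply max_le _ (by norm_num)
    have h0 : 0 ≤ Metric.infDist x C := Metric.infDist_nonneg
    have : 0 ≤ Metric.infDist x C / lam := div_nonneg h0 hlam.le
    linarith

lemma hFun_lipschitz {lam : ℝ} (hlam : 0 < lam) (C : Set S) :
    LipschitzWith (Real.toNNReal lam⁻¹) (hFun lam C) := by
  apply LipschitzWith.of_dist_le_mul
  intro x y
  have hd : |Metric.infDist x C - Metric.infDist y C| ≤ dist x y := by
    have := (Metric.lipschitz_infDist_pt C).dist_le_mul x y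
    rwa [Real.dist_eq, NNReal.coe_one, one_mul] at this
  rw [Real.dist_eq]
  unfold hFun
  calc |max (1 - Metric.infDist x C / lam) 0 - max (1 - Metric.infDist y C / lam) 0|
      ≤ |(1 - Metric.infDist x C / lam) - (1 - Metric.infDist y C / lam)| :=
        abs_max_sub_max_le_abs _ _ _
    _ = |Metric.infDist x C - Metric.infDist y C| / lam := by
        have he : (1 - Metric.infDist x C / lam) - (1 - Metric.infDist y C / lam)
            = (Metric.infDist y C - Metric.infDist x C) / lam := by ring
        rw [he, abs_div, abs_of_pos hlam, abs_sub_comm]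
    _ ≤ dist x y / lam := by gcongr
    _ = (Real.toNNReal lam⁻¹ : ℝ) * dist x y := by
        rw [Real.coe_toNNReal _ (by positivity)]
        rw [div_eq_inv_mul]

lemma hFun_isBL {lam : ℝ} (hlam : 0 < lam) (C : Set S) : IsBL (hFun lam C) :=
  ⟨⟨1, hFun_abs_le hlam C⟩, ⟨_, hFun_lipschitz hlam C⟩⟩

lemma clamp_abs_sub {v w Ch : ℝ} (hw : |w| ≤ Ch) : |max (min v Ch) (-Ch) - w| ≤ |v - w| := by
  rw [abs_le] at hw
  rcases abs_cases (v - w) with ⟨h1, h2⟩ | ⟨h1, h2⟩ <;>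
    rw [abs_le] <;> constructor <;>
    simp only [max_def, min_def] <;> split_ifs <;> linarith

noncomputable def gIdx (u : ℕ → S) (i : Finset (ℕ × ℚ) × ℚ × ℚ) (x : S) : ℝ :=
  if hG : i.1.Nonempty then
    max (min (i.1.inf' hG fun p => (p.2 : ℝ) + (i.2.1 : ℝ) * dist x (u p.1)) ((i.2.2 : ℚ) : ℝ))
      (-((i.2.2 : ℚ) : ℝ))
  else 0

lemma gIdx_abs_le (u : ℕ → S) (i : Finset (ℕ × ℚ) × ℚ × ℚ) (x : S) :
    |gIdx u i x| ≤ |((i.2.2 : ℚ) : ℝ)| := by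
  unfold gIdx
  split_ifs with h
  · rw [abs_le]
    constructor
    · calc -|((i.2.2 : ℚ) : ℝ)| ≤ -((i.2.2 : ℚ) : ℝ) := neg_le_neg (le_abs_self _)
        _ ≤ _ := le_max_right _ _
    · apply max_le
      · exact le_trans (min_le_right _ _) (le_abs_self _)
      · exact neg_le_abs _
  · simp

lemma lipschitzWith_inf' {ι : Type*} (G : Finset ι) (hG : G.Nonempty) (φ : ι → S → ℝ)
    (K : NNReal) (h : ∀ p ∈ G, LipschitzWith K (φ p)) :
    LipschitzWith K (fun x => G.inf' hG (fun p => φ p x)) := by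
  apply LipschitzWith.of_dist_le_mul
  intro x y
  rw [Real.dist_eq, abs_sub_le_iff]
  constructor
  · obtain ⟨p, hp, hpe⟩ := G.exists_mem_eq_inf' hG (fun p => φ p y)
    rw [hpe]
    calc G.inf' hG (fun p => φ p x) - φ p y ≤ φ p x - φ p y :=
          sub_le_sub_right (Finset.inf'_le _ hp) _
      _ ≤ |φ p x - φ p y| := le_abs_self _
      _ = dist (φ p x) (φ p y) := (Real.dist_eq _ _).symm
      _ ≤ K * dist x y := (h p hp).dist_le_mul x y
  · obtain ⟨p, hp, hpe⟩ := G.exists_mem_eq_inf' hG (fun p => φ p x)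
    rw [hpe]
    calc G.inf' hG (fun p => φ p y) - φ p x ≤ φ p y - φ p x :=
          sub_le_sub_right (Finset.inf'_le _ hp) _
      _ ≤ |φ p y - φ p x| := le_abs_self _
      _ = dist (φ p y) (φ p x) := (Real.dist_eq _ _).symm
      _ ≤ K * dist x y := by rw [dist_comm (φ p y)]; exact (h p hp).dist_le_mul x y

lemma gIdx_lipschitz (u : ℕ → S) (i : Finset (ℕ × ℚ) × ℚ × ℚ) :
    LipschitzWith (Real.nnabs ((i.2.1 : ℚ) : ℝ)) (gIdx u i) := by
  unfold gIdx
  by_cases h : i.1.Nonempty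
  · simp only [dif_pos h]
    apply LipschitzWith.max_const
    apply LipschitzWith.min_const
    apply lipschitzWith_inf'
    intro p _
    apply LipschitzWith.of_dist_le_mul
    intro x y
    rw [Real.dist_eq, add_sub_add_left_eq_sub, ← mul_sub, abs_mul]
    calc |((i.2.1 : ℚ) : ℝ)| * |dist x (u p.1) - dist y (u p.1)|
        ≤ |((i.2.1 : ℚ) : ℝ)| * dist x y := by
          gcongr
          exact abs_dist_sub_le _ _ _
      _ = _ := by rw [Real.coe_nnabs]
  · simp only [dif_neg h]
    exact (LipschitzWith.const 0).weaken zero_le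

lemma gIdx_isBL (u : ℕ → S) (i : Finset (ℕ × ℚ) × ℚ × ℚ) : IsBL (gIdx u i) :=
  ⟨⟨_, gIdx_abs_le u i⟩, ⟨_, gIdx_lipschitz u i⟩⟩

lemma exists_gIdx_approx (u : ℕ → S) (hu : DenseRange u)
    {f : S → ℝ} {C : ℝ} (hb : ∀ x, |f x| ≤ C) {Lf : NNReal} (hf : LipschitzWith Lf f)
    {KK : Set S} (hK : IsCompact KK) {lam η : ℝ} (hlam : 0 ≤ lam) (hη : 0 < η)
    {Lh Ch : ℚ} (hLh : (Lf : ℝ) ≤ (Lh : ℝ)) (hCh : C ≤ (Ch : ℝ)) :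
    ∃ G : Finset (ℕ × ℚ), ∀ z ∈ Metric.cthickening lam KK,
      |f z - gIdx u (G, Lh, Ch) z| ≤ 2 * (Lh : ℝ) * (lam + 2 * η) + η := by
  have hcov : KK ⊆ ⋃ n, Metric.ball (u n) η := by
    intro y _
    obtain ⟨n, hn⟩ := Metric.denseRange_iff.mp hu y η hη
    exact Set.mem_iUnion.mpr ⟨n, Metric.mem_ball.mpr hn⟩
  obtain ⟨t, ht⟩ := hK.elim_finite_subcover _ (fun n => Metric.isOpen_ball) hcov
  have hc : ∀ n, ∃ q : ℚ, |f (u n) - (q : ℝ)| < η := fun n => exists_rat_near _ hη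
  choose c hcq using hc
  set G : Finset (ℕ × ℚ) := (insert 0 t).image (fun n => (n, c n)) with hG
  have hGne : G.Nonempty :=
    ⟨(0, c 0), Finset.mem_image.mpr ⟨0, Finset.mem_insert_self _ _, rfl⟩⟩
  have hGmem : ∀ p ∈ G, p.2 = c p.1 := by
    intro p hp
    obtain ⟨n, _, rfl⟩ := Finset.mem_image.mp hp
    rfl
  refine ⟨G, ?_⟩
  intro z hz
  set β := lam + 2 * η with hβdef
  have hβ0 : 0 ≤ β := by positivity
  have hLf0 : (0:ℝ) ≤ (Lf : ℝ) := Lf.coe_nonneg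
  have hLh0 : (0:ℝ) ≤ (Lh : ℝ) := le_trans hLf0 hLh
  obtain ⟨p, hpG, hpd⟩ : ∃ p ∈ G, dist z (u p.1) < β := by
    have h1 : EMetric.infEdist z KK ≤ ENNReal.ofReal lam := Metric.mem_cthickening_iff.mp hz
    have h2 : EMetric.infEdist z KK < ENNReal.ofReal (lam + η) :=
      lt_of_le_of_lt h1 ((ENNReal.ofReal_lt_ofReal_iff (by linarith)).mpr (by linarith))
    obtain ⟨y, hyK, hy⟩ := EMetric.infEdist_lt_iff.mp h2
    have hzy : dist z y < lam + η := by
      rwa [← edist_lt_ofReal]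
    obtain ⟨n, hnt, hny⟩ : ∃ n ∈ t, y ∈ Metric.ball (u n) η := by
      have := ht hyK
      simpa using this
    refine ⟨(n, c n), Finset.mem_image.mpr ⟨n, Finset.mem_insert_of_mem hnt, rfl⟩, ?_⟩
    have htri : dist z (u n) ≤ dist z y + dist y (u n) := dist_triangle _ _ _
    have hyn : dist y (u n) < η := Metric.mem_ball.mp hny
    simp only [hβdef]
    linarith
  set v := G.inf' hGne (fun p => (p.2 : ℝ) + (Lh : ℝ) * dist z (u p.1)) with hv
  have hflip : ∀ w : S, |f z - f w| ≤ (Lf : ℝ) * dist z w := by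
    intro w
    have := hf.dist_le_mul z w
    rwa [Real.dist_eq] at this
  have hup : v ≤ f z + 2 * (Lh : ℝ) * β + η := by
    have h1 : v ≤ (p.2 : ℝ) + (Lh : ℝ) * dist z (u p.1) := Finset.inf'_le _ hpG
    have h2 : |f (u p.1) - (c p.1 : ℝ)| < η := hcq p.1
    have h3 : |f z - f (u p.1)| ≤ (Lf : ℝ) * dist z (u p.1) := hflip _
    have h4 : (Lf : ℝ) * dist z (u p.1) ≤ (Lh : ℝ) * β :=
      mul_le_mul hLh hpd.le dist_nonneg hLh0
    have h5 : (Lh : ℝ) * dist z (u p.1) ≤ (Lh : ℝ) * β :=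
      mul_le_mul_of_nonneg_left hpd.le hLh0
    rw [hGmem p hpG] at h1
    rcases abs_le.mp h2.le with ⟨h2a, h2b⟩
    rcases abs_le.mp h3 with ⟨h3a, h3b⟩
    linarith
  have hlow : f z - η ≤ v := by
    apply Finset.le_inf'
    intro q hq
    have h2 : |f (u q.1) - (c q.1 : ℝ)| < η := hcq q.1
    have h3 : |f z - f (u q.1)| ≤ (Lf : ℝ) * dist z (u q.1) := hflip _
    have h4 : (Lf : ℝ) * dist z (u q.1) ≤ (Lh : ℝ) * dist z (u q.1) :=
      mul_le_mul_of_nonneg_right hLh dist_nonneg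
    rw [hGmem q hq]
    rcases abs_le.mp h2.le with ⟨h2a, h2b⟩
    rcases abs_le.mp h3 with ⟨h3a, h3b⟩
    linarith
  have hclamp : |gIdx u (G, Lh, Ch) z - f z| ≤ |v - f z| := by
    unfold gIdx
    simp only [dif_pos hGne]
    exact clamp_abs_sub (le_trans (hb z) hCh)
  rw [abs_sub_comm]
  refine le_trans hclamp ?_
  rw [abs_le]
  constructor
  · have : 0 ≤ 2 * (Lh : ℝ) * β := by positivity
    linarith
  · linarith

end HFunLemmas


set_option maxHeartbeats 1600000 in
/-- Lemma providing a tractable condition for first countability of the relative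
`σ(M(S), BL(S))`-weak topology on a set `M` of signed measures which is bounded in total
variation norm. -/
theorem firstCountable_of_tractable_condition {S : Type*} [MetricSpace S] [CompleteSpace S]
    [TopologicalSpace.SeparableSpace S] [MeasurableSpace S] [BorelSpace S]
    (M : Set (SignedMeasure S)) (hTV : ∃ m : ℝ, ∀ μ ∈ M, tvNorm μ ≤ m)
    (hcond : ∀ μ ∈ M, ∀ ε : ℝ, 0 < ε → ∃ (n : ℕ) (K : Fin n → Set S),
      (∀ i, IsCompact (K i)) ∧
      (((μ : SignedMeasure S).totalVariation (⋃ i, K i)ᶜ).toReal < ε) ∧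
      ∃ lam₀ : ℝ, 0 < lam₀ ∧ lam₀ ≤ ε ∧ ∀ lam : ℝ, 0 < lam → lam ≤ lam₀ →
        ∃ δ : Fin n → ℝ, (∀ i, 0 < δ i) ∧ ∀ ν ∈ M,
          (∀ i, |pairing (μ - ν) (hFun lam (K i))| < δ i) →
          ((ν : SignedMeasure S).totalVariation (Metric.cthickening lam (⋃ i, K i))ᶜ).toReal
            < ε) :
    @FirstCountableTopology M
      (TopologicalSpace.induced ((↑) : M → SignedMeasure S) (weakTop S)) := by
  classical
  refine @FirstCountableTopology.mk M
    (TopologicalSpace.induced ((↑) : M → SignedMeasure S) (weakTop S)) (fun x => ?_)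
  rcases isEmpty_or_nonempty S with hS | hS
  · -- the degenerate case of an empty space
    have hsub : Subsingleton (SignedMeasure S) := ⟨fun a b => by
      apply VectorMeasure.ext
      intro i hi
      have : i = ∅ := Set.eq_empty_of_isEmpty i
      rw [this, VectorMeasure.empty, VectorMeasure.empty]⟩
    haveI : Subsingleton M := ⟨fun a b => Subtype.ext (hsub.allEq _ _)⟩
    have hpure : @nhds M (TopologicalSpace.induced ((↑) : M → SignedMeasure S) (weakTop S)) x
        = pure x := by
      apply le_antisymm
      · intro s hs
        have hxs : x ∈ s := hs
        have : s = Set.univ := Set.eq_univ_iff_forall.mpr fun y => (Subsingleton.elim y x) ▸ hxs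
        rw [this]
        exact Filter.univ_mem
      · exact @pure_le_nhds M
          (TopologicalSpace.induced ((↑) : M → SignedMeasure S) (weakTop S)) x
    rw [hpure]
    infer_instance
  · obtain ⟨m, hm⟩ := hTV
    letI : TopologicalSpace (SignedMeasure S) := weakTop S
    set μ : SignedMeasure S := (x : SignedMeasure S) with hμdef
    have hxM : μ ∈ M := x.2
    set u : ℕ → S := TopologicalSpace.denseSeq S with hudef
    have hu : DenseRange u := TopologicalSpace.denseRange_denseSeq S
    -- extract data from the tractable condition at scales 1/(k+1)
    have hc1 := fun k : ℕ => hcond μ hxM (1 / ((k : ℝ) + 1)) (by positivity)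
    choose n K hKcomp hKtail lam₀ hlam₀pos hlam₀le hlam using hc1
    have hc2 : ∀ (k : ℕ) (l : ℚ), ∃ δ : Fin (n k) → ℝ,
        0 < (l : ℝ) → (l : ℝ) ≤ lam₀ k → ((∀ i, 0 < δ i) ∧ ∀ ν ∈ M,
          (∀ i, |pairing (μ - ν) (hFun (l : ℝ) (K k i))| < δ i) →
          ((ν.totalVariation (Metric.cthickening (l : ℝ) (⋃ i, K k i))ᶜ).toReal
            < 1 / ((k : ℝ) + 1))) := by
      intro k l
      by_cases h : 0 < (l : ℝ) ∧ (l : ℝ) ≤ lam₀ k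
      · obtain ⟨δ, h1, h2⟩ := hlam k (l : ℝ) h.1 h.2
        exact ⟨δ, fun _ _ => ⟨h1, h2⟩⟩
      · exact ⟨fun _ => 1, fun h1 h2 => absurd ⟨h1, h2⟩ h⟩
    choose δ hδ using hc2
    -- the countable family of generating sets
    set A : ℕ → ℚ → Set M := fun k l =>
      {ν : M | ∀ i, |pairing (μ - (ν : SignedMeasure S)) (hFun (l : ℝ) (K k i))| < δ k l i}
      with hAdef
    set B : (Finset (ℕ × ℚ) × ℚ × ℚ) → ℚ → Set M := fun j r =>
      {ν : M | |pairing (μ - (ν : SignedMeasure S)) (gIdx u j)| < (r : ℝ)} with hBdef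
    set 𝒮 : Set (Set M) :=
      (Set.range fun p : (Σ k : ℕ, {q : ℚ // 0 < (q : ℝ) ∧ (q : ℝ) ≤ lam₀ k}) => A p.1 p.2.1) ∪
      (Set.range fun p : (Finset (ℕ × ℚ) × ℚ × ℚ) × {r : ℚ // 0 < r} => B p.1 p.2.1) with h𝒮def
    have hcount : 𝒮.Countable := (Set.countable_range _).union (Set.countable_range _)
    -- basic pairing facts
    have hpair_sub : ∀ (g : S → ℝ), IsBL g → ∀ ν : SignedMeasure S,
        pairing (μ - ν) g = pairing μ g - pairing ν g := by
      intro g hg ν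
      obtain ⟨⟨C, hC⟩, ⟨Kg, hKg⟩⟩ := hg
      exact pairing_sub μ ν hKg.continuous hC
    have hcont : ∀ g : {g : S → ℝ // IsBL g},
        @Continuous _ _ (weakTop S) _ (fun ν : SignedMeasure S => pairing ν g.1) := by
      intro g
      exact continuous_iInf_dom
        (t₁ := fun f : {g : S → ℝ // IsBL g} => TopologicalSpace.induced
          (fun ν : SignedMeasure S => pairing ν f.1) inferInstance) (i := g)
        continuous_induced_dom
    -- each member of the family is a neighbourhood of x
    have hnbhd : ∀ (N : ℕ) (g : Fin N → {g : S → ℝ // IsBL g}) (r : Fin N → ℝ),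
        (∀ j, 0 < r j) →
        {ν : M | ∀ j, |pairing (μ - (ν : SignedMeasure S)) ((g j) : S → ℝ)| < r j} ∈
          @nhds M (TopologicalSpace.induced ((↑) : M → SignedMeasure S) (weakTop S)) x := by
      intro N g r hr
      have hset : {ν : SignedMeasure S | ∀ j, |pairing (μ - ν) ((g j) : S → ℝ)| < r j}
          = ⋂ j, (fun ν : SignedMeasure S => pairing ν ((g j) : S → ℝ)) ⁻¹'
            (Metric.ball (pairing μ ((g j) : S → ℝ)) (r j)) := by
        ext ν
        simp only [Set.mem_setOf_eq, Set.mem_iInter, Set.mem_preimage, Metric.mem_ball,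
          Real.dist_eq]
        refine forall_congr' fun j => ?_
        rw [hpair_sub _ (g j).2, abs_sub_comm]
      have hopen : IsOpen
          {ν : SignedMeasure S | ∀ j, |pairing (μ - ν) ((g j) : S → ℝ)| < r j} := by
        rw [hset]
        exact isOpen_iInter_of_finite fun j =>
          (hcont (g j)).isOpen_preimage _ Metric.isOpen_ball
      have hxmem : μ ∈ {ν : SignedMeasure S | ∀ j, |pairing (μ - ν) ((g j) : S → ℝ)| < r j} := by
        intro j
        rw [sub_self, pairing_zero]
        simpa using hr j
      have hmem2 : {ν : SignedMeasure S | ∀ j, |pairing (μ - ν) ((g j) : S → ℝ)| < r j}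
          ∈ 𝓝 μ := hopen.mem_nhds hxmem
      rw [@nhds_induced _ _ (weakTop S) ((↑) : M → SignedMeasure S) x]
      exact Filter.preimage_mem_comap hmem2
    -- description of the weak neighbourhood filter
    have hW : @nhds _ (weakTop S) μ
        = ⨅ f : {g : S → ℝ // IsBL g}, Filter.comap
            (fun ν : SignedMeasure S => pairing ν f.1) (𝓝 (pairing μ f.1)) := by
      have h1 : @nhds _ (weakTop S) μ
          = ⨅ f : {g : S → ℝ // IsBL g}, @nhds _ (TopologicalSpace.induced
              (fun ν : SignedMeasure S => pairing ν f.1) inferInstance) μ :=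
        @nhds_iInf _ _ _ μ
      rw [h1]
      exact iInf_congr fun f => @nhds_induced _ _ _ _ μ
    -- the key quantitative approximation step
    have hkey : ∀ (f : S → ℝ), IsBL f → ∀ ε' : ℝ, 0 < ε' → ∃ T : Set (Set M),
        T ⊆ 𝒮 ∧ T.Finite ∧ ∀ ν : M, ν ∈ ⋂₀ T →
          |pairing (ν : SignedMeasure S) f - pairing μ f| < ε' := by
      intro f hf ε' hε'
      obtain ⟨⟨C₀, hC₀⟩, ⟨Lf, hLf⟩⟩ := hf
      set C := max C₀ 0 with hCdef
      have hC : ∀ y, |f y| ≤ C := fun y => le_trans (hC₀ y) (le_max_left _ _)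
      have hC0 : (0:ℝ) ≤ C := le_max_right _ _
      obtain ⟨Lh, hLh⟩ := exists_rat_gt (Lf : ℝ)
      have hLh0 : (0:ℝ) < (Lh : ℝ) := lt_of_le_of_lt Lf.coe_nonneg hLh
      obtain ⟨Ch, hCh1, hCh2⟩ := exists_rat_btwn (show C < C + 1 by linarith)
      set b := 2 * C + 2 with hbdef
      have hb0 : (0:ℝ) < b := by rw [hbdef]; linarith
      have hm0 : (0:ℝ) ≤ m := le_trans ENNReal.toReal_nonneg (hm μ hxM)
      set α := ε' / (8 * (m + 1)) with hαdef
      have hα : 0 < α := by rw [hαdef]; positivity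
      have hsmall : (0:ℝ) < min (ε' / (8 * (b + 1))) (α / (8 * (Lh:ℝ) + 2)) := by
        apply lt_min
        · positivity
        · positivity
      obtain ⟨k, hk⟩ := exists_nat_one_div_lt hsmall
      set ε := 1 / ((k:ℝ) + 1) with hεdef
      have hε : 0 < ε := by rw [hεdef]; positivity
      have hεa : ε < ε' / (8 * (b + 1)) := lt_of_lt_of_le hk (min_le_left _ _)
      have hεb : ε < α / (8 * (Lh:ℝ) + 2) := lt_of_lt_of_le hk (min_le_right _ _)
      obtain ⟨l, hl1, hl2⟩ := exists_rat_btwn (hlam₀pos k)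
      have hl0 : (0:ℝ) < (l:ℝ) := hl1
      have hlle : (l:ℝ) ≤ lam₀ k := hl2.le
      have hlε : (l:ℝ) ≤ ε := by rw [hεdef]; exact le_trans hl2.le (hlam₀le k)
      have hKU : IsCompact (⋃ i, K k i) := isCompact_iUnion (hKcomp k)
      set Q := Metric.cthickening (l:ℝ) (⋃ i, K k i) with hQdef
      have hQmeas : MeasurableSet Q := Metric.isClosed_cthickening.measurableSet
      obtain ⟨G, hG⟩ := exists_gIdx_approx u hu hC hLf hKU hl0.le hε hLh.le hCh1.le
      set g := gIdx u (G, Lh, Ch) with hgdef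
      have happrox : ∀ z ∈ Q, |f z - g z| ≤ α := by
        intro z hz
        refine le_trans (hG z hz) ?_
        have h9 : ε * (8 * (Lh:ℝ) + 2) < α := (lt_div_iff₀ (by positivity)).mp hεb
        nlinarith
      obtain ⟨r, hr1, hr2⟩ := exists_rat_btwn (show (0:ℝ) < ε' / 8 by positivity)
      have hr0 : 0 < r := by exact_mod_cast hr1
      refine ⟨{A k l, B (G, Lh, Ch) r}, ?_, ?_, ?_⟩
      · rintro s (rfl | rfl)
        · exact Or.inl ⟨⟨k, ⟨l, hl0, hlle⟩⟩, rfl⟩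
        · exact Or.inr ⟨⟨(G, Lh, Ch), ⟨r, hr0⟩⟩, rfl⟩
      · exact (Set.finite_singleton _).insert _
      · intro ν hν
        have hνA : ν ∈ A k l := hν (A k l) (Set.mem_insert _ _)
        have hνB : ν ∈ B (G, Lh, Ch) r := hν _ (Set.mem_insert_of_mem _ rfl)
        simp only [hAdef] at hνA
        simp only [hBdef] at hνB
        have hνM : (ν : SignedMeasure S) ∈ M := ν.2
        have hδs := hδ k l hl0 hlle
        have hνtail : (((ν : SignedMeasure S)).totalVariation Qᶜ).toReal < ε := by
          rw [hQdef, hεdef]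
          exact hδs.2 ν hνM (fun i => hνA i)
        have hμtailQ : (μ.totalVariation Qᶜ).toReal < ε := by
          have hsub : Qᶜ ⊆ (⋃ i, K k i)ᶜ :=
            Set.compl_subset_compl.mpr (Metric.self_subset_cthickening _)
          have hmono : μ.totalVariation Qᶜ ≤ μ.totalVariation (⋃ i, K k i)ᶜ := measure_mono hsub
          have h10 := ENNReal.toReal_mono (measure_ne_top _ _) hmono
          rw [hεdef]
          exact lt_of_le_of_lt h10 (hKtail k)
        have hfcont : Continuous f := hLf.continuous
        have hgcont : Continuous g := by rw [hgdef]; exact (gIdx_lipschitz u _).continuous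
        have hgbd : ∀ z, |g z| ≤ C + 1 := by
          intro z
          have h12 : |g z| ≤ |((Ch : ℚ) : ℝ)| := gIdx_abs_le u (G, Lh, Ch) z
          have h13 : |((Ch : ℚ) : ℝ)| = ((Ch : ℚ) : ℝ) :=
            abs_of_nonneg (le_trans hC0 hCh1.le)
          rw [h13] at h12
          linarith
        have hfg : ∀ z, |f z - g z| ≤ b := by
          intro z
          calc |f z - g z| ≤ |f z| + |g z| := abs_sub _ _
            _ ≤ C + (C + 1) := add_le_add (hC z) (hgbd z)
            _ ≤ b := by rw [hbdef]; linarith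
        have hfgcont : Continuous (fun z => f z - g z) := hfcont.sub hgcont
        have hsplit : ∀ ρ : SignedMeasure S, ρ ∈ M → (ρ.totalVariation Qᶜ).toReal < ε →
            |pairing ρ f - pairing ρ g| ≤ α * m + b * ε := by
          intro ρ hρ hρtail
          have hpm : pairing ρ (fun z => f z - g z) = pairing ρ f - pairing ρ g := by
            unfold pairing
            rw [integral_sub (integrable_of_cont_bdd _ hfcont hC)
                (integrable_of_cont_bdd _ hgcont hgbd),
              integral_sub (integrable_of_cont_bdd _ hfcont hC)
                (integrable_of_cont_bdd _ hgcont hgbd)]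
            ring
          have h1 : |pairing ρ (fun z => f z - g z)| ≤ ∫ z, |f z - g z| ∂ρ.totalVariation :=
            pairing_abs_le ρ hfgcont hfg
          have h2 : ∫ z, |f z - g z| ∂ρ.totalVariation
              ≤ α * (ρ.totalVariation Q).toReal + b * (ρ.totalVariation Qᶜ).toReal :=
            integral_abs_split _ hfgcont hQmeas happrox hfg
          have h3 : (ρ.totalVariation Q).toReal ≤ m := by
            refine le_trans ?_ (hm ρ hρ)
            unfold tvNorm
            exact ENNReal.toReal_mono (measure_ne_top _ _) (measure_mono (Set.subset_univ _))
          have h4 : α * (ρ.totalVariation Q).toReal ≤ α * m :=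
            mul_le_mul_of_nonneg_left h3 hα.le
          have h5 : b * (ρ.totalVariation Qᶜ).toReal ≤ b * ε :=
            mul_le_mul_of_nonneg_left hρtail.le hb0.le
          rw [← hpm]
          linarith
        have hgBL : IsBL g := by rw [hgdef]; exact gIdx_isBL u _
        have hdecomp : pairing (ν : SignedMeasure S) f - pairing μ f
            = (pairing (ν : SignedMeasure S) f - pairing (ν : SignedMeasure S) g)
              - (pairing μ f - pairing μ g) - pairing (μ - (ν : SignedMeasure S)) g := by
          rw [hpair_sub g hgBL (ν : SignedMeasure S)]
          ring
        have e1 := hsplit (ν : SignedMeasure S) hνM hνtail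
        have e2 := hsplit μ hxM hμtailQ
        have e3 : |pairing (μ - (ν : SignedMeasure S)) g| < (r:ℝ) := hνB
        have hαm : α * m ≤ ε' / 8 := by
          rw [hαdef, div_mul_eq_mul_div, div_le_div_iff₀ (by positivity) (by norm_num)]
          nlinarith
        have hbε : b * ε ≤ ε' / 8 := by
          have h11 : ε * (8 * (b + 1)) < ε' := (lt_div_iff₀ (by positivity)).mp hεa
          nlinarith
        have habs : |(pairing (ν : SignedMeasure S) f - pairing (ν : SignedMeasure S) g)
              - (pairing μ f - pairing μ g) - pairing (μ - (ν : SignedMeasure S)) g|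
            ≤ |pairing (ν : SignedMeasure S) f - pairing (ν : SignedMeasure S) g|
              + |pairing μ f - pairing μ g| + |pairing (μ - (ν : SignedMeasure S)) g| := by
          calc |(pairing (ν : SignedMeasure S) f - pairing (ν : SignedMeasure S) g)
              - (pairing μ f - pairing μ g) - pairing (μ - (ν : SignedMeasure S)) g|
              ≤ |(pairing (ν : SignedMeasure S) f - pairing (ν : SignedMeasure S) g)
                - (pairing μ f - pairing μ g)| + |pairing (μ - (ν : SignedMeasure S)) g| :=
                abs_sub _ _
            _ ≤ _ := add_le_add_left (abs_sub _ _) _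
        rw [hdecomp]
        refine lt_of_le_of_lt habs ?_
        have hr8 : (r:ℝ) < ε' / 8 := hr2
        have ht1 : |pairing (ν : SignedMeasure S) f - pairing (ν : SignedMeasure S) g|
              + |pairing μ f - pairing μ g| + |pairing (μ - (ν : SignedMeasure S)) g|
            < (α * m + b * ε) + (α * m + b * ε) + (r : ℝ) :=
          add_lt_add_of_le_of_lt (add_le_add e1 e2) e3
        refine lt_trans ht1 ?_
        calc α * m + b * ε + (α * m + b * ε) + (r : ℝ)
            ≤ ε' / 8 + ε' / 8 + (ε' / 8 + ε' / 8) + (r : ℝ) :=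
              add_le_add (add_le_add (add_le_add hαm hbε) (add_le_add hαm hbε)) le_rfl
          _ ≤ ε' / 8 + ε' / 8 + (ε' / 8 + ε' / 8) + ε' / 8 :=
              add_le_add le_rfl hr8.le
          _ < ε' := by linarith
    -- conclude
    have hEq : @nhds M (TopologicalSpace.induced ((↑) : M → SignedMeasure S) (weakTop S)) x
        = Filter.generate 𝒮 := by
      apply le_antisymm
      · rw [Filter.le_generate_iff]
        rintro s (⟨p, rfl⟩ | ⟨p, rfl⟩)
        · exact hnbhd (n p.1) (fun i => ⟨hFun (p.2.1 : ℝ) (K p.1 i), hFun_isBL p.2.2.1 _⟩)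
            (δ p.1 p.2.1) (hδ p.1 p.2.1 p.2.2.1 p.2.2.2).1
        · have hmem := hnbhd 1 (fun _ => ⟨gIdx u p.1, gIdx_isBL u p.1⟩)
            (fun _ => ((p.2.1 : ℚ) : ℝ)) (fun _ => by show (0:ℝ) < ((p.2.1 : ℚ) : ℝ); exact_mod_cast p.2.2)
          have heq : {ν : M | ∀ _j : Fin 1,
              |pairing (μ - (ν : SignedMeasure S)) (gIdx u p.1)| < ((p.2.1 : ℚ) : ℝ)}
              = B p.1 p.2.1 := by
            ext ν
            simp [hBdef]
          rw [heq] at hmem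
          exact hmem
      · rw [Filter.le_def]
        intro V hV
        rw [Filter.mem_generate_iff]
        rw [@nhds_induced _ _ (weakTop S) ((↑) : M → SignedMeasure S) x, ← hμdef] at hV
        obtain ⟨W, hWmem, hWsub⟩ := Filter.mem_comap.mp hV
        rw [hW, Filter.mem_iInf] at hWmem
        obtain ⟨I, hIfin, Vf, hVf, rfl⟩ := hWmem
        have hstep : ∀ i : I, ∃ T : Set (Set M), T ⊆ 𝒮 ∧ T.Finite ∧
            ∀ ν : M, ν ∈ ⋂₀ T → (ν : SignedMeasure S) ∈ Vf i := by
          intro i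
          obtain ⟨U, hU, hUsub⟩ := Filter.mem_comap.mp (hVf i)
          obtain ⟨ε', hε', hball⟩ := Metric.mem_nhds_iff.mp hU
          obtain ⟨T, hT1, hT2, hT3⟩ := hkey ((i : {g : S → ℝ // IsBL g}) : S → ℝ)
            (i : {g : S → ℝ // IsBL g}).2 ε' hε'
          refine ⟨T, hT1, hT2, fun ν hν => hUsub (hball ?_)⟩
          rw [Metric.mem_ball, Real.dist_eq]
          exact hT3 ν hν
        choose T hT1 hT2 hT3 using hstep
        refine ⟨⋃ i : I, T i, Set.iUnion_subset hT1, ?_, ?_⟩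
        · haveI := hIfin.to_subtype
          exact Set.finite_iUnion hT2
        · intro ν hν
          apply hWsub
          refine Set.mem_preimage.mpr (Set.mem_iInter.mpr fun i => hT3 i ν ?_)
          exact fun t ht' => hν t (Set.mem_iUnion.mpr ⟨i, ht'⟩)
    rw [hEq]
    exact ⟨⟨𝒮, hcount, rfl⟩⟩
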